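/- arXiv:1105.1310 — 4 statements merged into one kernel-verified Lean document; each statement's English description precedes it below -/
import Mathlib

section
/- Let X and ε be independent real random variables, where ε has a density f_ε with respect to Lebesgue measure whose Fourier transform f_ε* never vanishes, and set Z = X + ε. Let φ be a continuous integrable function on ℝ such that the function t ↦ φ*(t)/f_ε*(t) is integrable. Then E[φ(X)] = (1/2π) E[ ∫ φ*(t) e^{−itZ} / f_ε*(−t) dt ], and in particular E[φ(X)] equals the real part of this quantity. -/
open MeasureTheory ProbabilityTheory Set
open scoped ProbabilityTheory FourierTransform Real NNReal ENNReal

/-- Fourier transform of an integrable real function: `g*(t) = ∫ e^{itx} g(x) dx`. -/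
noncomputable def ftR (g : ℝ → ℝ) (t : ℝ) : ℂ :=
  ∫ x : ℝ, Complex.exp (Complex.I * (t : ℂ) * (x : ℂ)) * (g x : ℂ)

lemma norm_exp_of_re_eq_zero {z : ℂ} (h : z.re = 0) : ‖Complex.exp z‖ = 1 := by
  rw [Complex.norm_exp, h, Real.exp_zero]

lemma norm_exp_neg_I_mul (t z : ℝ) : ‖Complex.exp (-(Complex.I * (t:ℂ) * (z:ℂ)))‖ = 1 :=
  norm_exp_of_re_eq_zero (by simp)

lemma ftR_eq (g : ℝ → ℝ) (t : ℝ) :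
    ftR g t = 𝓕 (fun x => (g x : ℂ)) (-(t / (2 * π))) := by
  rw [Real.fourier_real_eq_integral_exp_smul]
  unfold ftR
  congr 1; ext x
  rw [smul_eq_mul]
  congr 1
  have h : (-2 * π * x * -(t / (2 * π)) : ℝ) = x * t := by
    field_simp
  rw [h]; push_cast; ring

lemma cont_fourier {g : ℝ → ℂ} (hg : Integrable g volume) :
    Continuous (𝓕 g) := by
  exact VectorFourier.fourierIntegral_continuous Real.continuous_fourierChar
    (innerSL ℝ).continuous₂ hg

lemma ftR_continuous {g : ℝ → ℝ} (hg : Integrable g volume) : Continuous (ftR g) := by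
  have : Continuous fun t : ℝ => 𝓕 (fun x => (g x : ℂ)) (-(t / (2 * π))) :=
    (cont_fourier hg.ofReal).comp ((continuous_id.div_const _).neg)
  exact this.congr fun t => (ftR_eq g t).symm

lemma ftR_neg (g : ℝ → ℝ) (t : ℝ) : ftR g (-t) = starRingEnd ℂ (ftR g t) := by
  unfold ftR
  rw [← integral_conj]
  congr 1; ext x
  rw [map_mul, ← Complex.exp_conj]
  simp only [map_mul, Complex.conj_I, Complex.conj_ofReal]
  push_cast
  ring_nf

/-- Fourier inversion in the `ftR` normalization. -/
lemma ftR_inversion {φ : ℝ → ℝ} (hc : Continuous φ) (hint : Integrable φ volume)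
    (hft : Integrable (ftR φ) volume) (x : ℝ) :
    ∫ t : ℝ, ftR φ t * Complex.exp (-(Complex.I * (t:ℂ) * (x:ℂ))) = ((2 * π : ℝ) : ℂ) * φ x := by
  have hπ : (2 * π : ℝ) ≠ 0 := by positivity
  set φc : ℝ → ℂ := fun y => (φ y : ℂ) with hφc
  have hφcc : Continuous φc := Complex.continuous_ofReal.comp hc
  have hφci : Integrable φc volume := hint.ofReal
  have h𝓕 : ∀ w : ℝ, 𝓕 φc w = ftR φ (-(2 * π * w)) := by
    intro w; rw [ftR_eq]; congr 1; field_simp; rfl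
  have h𝓕int : Integrable (𝓕 φc) volume := by
    have : (𝓕 φc) = fun w => ftR φ ((-(2 * π)) * w) := by
      ext w; rw [h𝓕]; ring_nf
    rw [this]
    exact hft.comp_mul_left' (neg_ne_zero.2 hπ)
  have hinv : 𝓕⁻ (𝓕 φc) x = φc x := by
    rw [hφcc.fourierInv_fourier_eq hφci h𝓕int]
  set F : ℝ → ℂ := fun v => Complex.exp (((-2 * π * v * (-x) : ℝ) : ℂ) * Complex.I) • 𝓕 φc v
    with hF
  have hIF : ∫ v, F v = φc x := by
    rw [← hinv, Real.fourierInv_eq_fourier_neg,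
      Real.fourier_real_eq_integral_exp_smul]
  have key : ∀ t : ℝ, F ((-(2 * π))⁻¹ * t) = ftR φ t * Complex.exp (-(Complex.I * t * x)) := by
    intro t
    rw [hF]
    simp only
    rw [h𝓕]
    have h1 : -(2 * π * ((-(2 * π))⁻¹ * t)) = t := by field_simp
    have h2 : (-2 * π * ((-(2 * π))⁻¹ * t) * (-x) : ℝ) = -(t * x) := by field_simp
    rw [h1, h2, smul_eq_mul, mul_comm]
    congr 1
    push_cast
    ring
  calc ∫ t : ℝ, ftR φ t * Complex.exp (-(Complex.I * (t:ℂ) * (x:ℂ)))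
      = ∫ t : ℝ, F ((-(2 * π))⁻¹ * t) := by
        refine integral_congr_ae (ae_of_all _ fun t => ?_)
        beta_reduce
        exact (key t).symm
    _ = |((-(2 * π))⁻¹)⁻¹| • ∫ v, F v := MeasureTheory.Measure.integral_comp_mul_left F _
    _ = ((2 * π : ℝ) : ℂ) * φ x := by
        rw [hIF, inv_inv, abs_neg, abs_of_pos (by positivity : (0:ℝ) < 2 * π)]
        rw [Complex.real_smul]

/-- Let `X` and `ε` be independent, `ε` with known density `f_ε` whose Fourier
transform never vanishes, and `Z = X + ε`. For a continuous integrable `φ` with `φ*/f_ε*`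
integrable, `E[φ(X)] = (1/2π) E[∫ φ*(t) e^{−itZ} / f_ε*(−t) dt]`, and in particular `E[φ(X)]`
is the real part of this quantity. -/
theorem stmt0 {Ω : Type*} [MeasureSpace Ω] [IsProbabilityMeasure (ℙ : Measure Ω)]
    (X ε : Ω → ℝ) (hXm : Measurable X) (hεm : Measurable ε)
    (hindep : IndepFun X ε ℙ)
    (fε : ℝ → ℝ) (hfε0 : ∀ x, 0 ≤ fε x)
    (hεlaw : Measure.map ε ℙ = volume.withDensity (fun x => ENNReal.ofReal (fε x)))
    (hfεnz : ∀ t : ℝ, ftR fε t ≠ 0)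
    (Z : Ω → ℝ) (hZ : ∀ ω, Z ω = X ω + ε ω)
    (φ : ℝ → ℝ) (hφc : Continuous φ) (hφint : Integrable φ volume)
    (hratio : Integrable (fun t => ftR φ t / ftR fε t) volume)
    (hφX : Integrable (fun ω => φ (X ω)) ℙ) :
    ((∫ ω, φ (X ω)) : ℂ) =
      (1 / (2 * Real.pi) : ℝ) *
        ∫ ω, ∫ t : ℝ, ftR φ t * Complex.exp (-(Complex.I * (t : ℂ) * (Z ω : ℂ))) /
          ftR fε (-t) ∧
    (∫ ω, φ (X ω)) =
      (1 / (2 * Real.pi)) *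
        (∫ ω, ∫ t : ℝ, ftR φ t * Complex.exp (-(Complex.I * (t : ℂ) * (Z ω : ℂ))) /
          ftR fε (-t)).re := by
  have hπ : (2 * π : ℝ) ≠ 0 := by positivity
  have hZm : Measurable Z := by
    have : Z = fun ω => X ω + ε ω := funext hZ
    rw [this]; exact hXm.add hεm
  -- integrability of fε
  have hfεc_int : Integrable (fun x => (fε x : ℂ)) volume := by
    by_contra h
    apply hfεnz 0
    unfold ftR
    have h0 : (fun x : ℝ => Complex.exp (Complex.I * ((0:ℝ):ℂ) * (x:ℂ)) * (fε x : ℂ))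
        = fun x : ℝ => (fε x : ℂ) := by
      ext x; simp
    rw [h0, integral_undef h]
  have hfεint : Integrable fε volume := by
    have := hfεc_int.re
    simpa using this
  -- total mass one
  have hmass : ∫ x, fε x = 1 := by
    have hprob : IsProbabilityMeasure (Measure.map ε ℙ) :=
      Measure.isProbabilityMeasure_map hεm.aemeasurable
    have h1 : (Measure.map ε ℙ) Set.univ = 1 := measure_univ
    rw [hεlaw, withDensity_apply _ MeasurableSet.univ, Measure.restrict_univ] at h1
    rw [integral_eq_lintegral_of_nonneg_ae (ae_of_all _ hfε0) hfεint.aestronglyMeasurable, h1]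
    simp
  -- bound on ftR fε
  have hbound : ∀ t : ℝ, ‖ftR fε t‖ ≤ 1 := by
    intro t
    calc ‖ftR fε t‖ ≤ ∫ x : ℝ, ‖Complex.exp (Complex.I * (t:ℂ) * (x:ℂ)) * (fε x : ℂ)‖ :=
          norm_integral_le_integral_norm _
      _ = ∫ x, fε x := by
          refine integral_congr_ae (ae_of_all _ fun x => ?_)
          beta_reduce
          rw [norm_mul, norm_exp_of_re_eq_zero (by simp), one_mul, Complex.norm_real,
            Real.norm_eq_abs, abs_of_nonneg (hfε0 x)]
      _ = 1 := hmass
  have hφft_cont : Continuous (ftR φ) := ftR_continuous hφint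
  have hfεft_cont : Continuous (ftR fε) := ftR_continuous hfεint
  -- ftR φ is integrable
  have hftφ_int : Integrable (ftR φ) volume := by
    have h1 : Integrable (fun t => ftR fε t * (ftR φ t / ftR fε t)) volume :=
      hratio.bdd_mul hfεft_cont.aestronglyMeasurable (ae_of_all _ hbound)
    refine h1.congr (ae_of_all _ fun t => ?_)
    show ftR fε t * (ftR φ t / ftR fε t) = ftR φ t
    rw [mul_comm, div_mul_cancel₀ _ (hfεnz t)]
  -- the multiplier K
  set K : ℝ → ℂ := fun t => ftR φ t / ftR fε (-t) with hKdef
  have hKcont : Continuous K :=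
    hφft_cont.div (hfεft_cont.comp continuous_neg) fun t => hfεnz (-t)
  have hKnorm : ∀ t, ‖K t‖ = ‖ftR φ t / ftR fε t‖ := by
    intro t
    rw [hKdef]
    simp only
    rw [norm_div, norm_div, ftR_neg, RCLike.norm_conj]
  have hKint : Integrable K volume := by
    refine (hratio.norm).mono' hKcont.aestronglyMeasurable (ae_of_all _ fun t => ?_)
    rw [hKnorm t]
  -- characteristic function of ε
  have hexpcont : ∀ t : ℝ, Continuous fun x : ℝ => Complex.exp (-(Complex.I * (t:ℂ) * (x:ℂ))) := by
    intro t
    exact Complex.continuous_exp.comp ((continuous_const.mul Complex.continuous_ofReal).neg)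
  have hexpcont2 : ∀ z : ℝ,
      Continuous fun t : ℝ => Complex.exp (-(Complex.I * (t:ℂ) * (z:ℂ))) := by
    intro z
    exact Complex.continuous_exp.comp
      (((continuous_const.mul Complex.continuous_ofReal).mul continuous_const).neg)
  have hchar_eps : ∀ t : ℝ,
      (∫ ω, Complex.exp (-(Complex.I * (t:ℂ) * (ε ω : ℂ)))) = ftR fε (-t) := by
    intro t
    have h1 : (∫ ω, Complex.exp (-(Complex.I * (t:ℂ) * (ε ω : ℂ))))
        = ∫ x, Complex.exp (-(Complex.I * (t:ℂ) * (x:ℂ))) ∂(Measure.map ε ℙ) :=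
      (integral_map hεm.aemeasurable (hexpcont t).aestronglyMeasurable).symm
    rw [h1, hεlaw]
    rw [show (fun x => ENNReal.ofReal (fε x)) = fun x => ((Real.toNNReal (fε x) : ℝ≥0) : ℝ≥0∞)
      from rfl]
    rw [integral_withDensity_eq_integral_smul₀
      hfεint.aestronglyMeasurable.real_toNNReal.aemeasurable _]
    unfold ftR
    refine integral_congr_ae (ae_of_all _ fun x => ?_)
    beta_reduce
    rw [NNReal.smul_def, Real.coe_toNNReal _ (hfε0 x), Complex.real_smul, mul_comm]
    congr 1
    push_cast
    ring
  -- independence: splitting the characteristic function of Z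
  have hpairlaw : Measure.map (fun ω => (X ω, ε ω)) ℙ
      = (Measure.map X ℙ).prod (Measure.map ε ℙ) :=
    (indepFun_iff_map_prod_eq_prod_map_map hXm.aemeasurable hεm.aemeasurable).1 hindep
  have hchar_split : ∀ t : ℝ,
      (∫ ω, Complex.exp (-(Complex.I * (t:ℂ) * (Z ω : ℂ))))
        = (∫ ω, Complex.exp (-(Complex.I * (t:ℂ) * (X ω : ℂ)))) * ftR fε (-t) := by
    intro t
    rw [← hchar_eps t]
    have h1 : (∫ ω, Complex.exp (-(Complex.I * (t:ℂ) * (Z ω : ℂ))))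
        = ∫ ω, Complex.exp (-(Complex.I * (t:ℂ) * (X ω : ℂ)))
            * Complex.exp (-(Complex.I * (t:ℂ) * (ε ω : ℂ))) := by
      refine integral_congr_ae (ae_of_all _ fun ω => ?_)
      beta_reduce
      rw [hZ, ← Complex.exp_add]
      congr 1
      push_cast
      ring
    rw [h1]
    have hcont2 : Continuous fun p : ℝ × ℝ =>
        Complex.exp (-(Complex.I * (t:ℂ) * (p.1:ℂ))) * Complex.exp (-(Complex.I * (t:ℂ) * (p.2:ℂ))) := by
      exact ((hexpcont t).comp continuous_fst).mul ((hexpcont t).comp continuous_snd)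
    have h2 : (∫ ω, Complex.exp (-(Complex.I * (t:ℂ) * (X ω : ℂ)))
            * Complex.exp (-(Complex.I * (t:ℂ) * (ε ω : ℂ))))
        = ∫ p : ℝ × ℝ, Complex.exp (-(Complex.I * (t:ℂ) * (p.1:ℂ)))
            * Complex.exp (-(Complex.I * (t:ℂ) * (p.2:ℂ)))
            ∂((Measure.map X ℙ).prod (Measure.map ε ℙ)) := by
      rw [← hpairlaw,
        integral_map (hXm.prodMk hεm).aemeasurable hcont2.aestronglyMeasurable]
    rw [h2]
    rw [integral_prod_mul (f := fun a : ℝ => Complex.exp (-(Complex.I * (t:ℂ) * (a:ℂ))))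
      (g := fun a : ℝ => Complex.exp (-(Complex.I * (t:ℂ) * (a:ℂ))))]
    congr 1
    · exact integral_map hXm.aemeasurable (hexpcont t).aestronglyMeasurable
    · exact integral_map hεm.aemeasurable (hexpcont t).aestronglyMeasurable
  -- integrability on product spaces
  have hmeas1 : AEStronglyMeasurable
      (fun p : Ω × ℝ => K p.2 * Complex.exp (-(Complex.I * (p.2:ℂ) * (Z p.1 : ℂ))))
      ((ℙ : Measure Ω).prod volume) := by
    have hc : Continuous fun q : ℝ × ℝ => K q.1 * Complex.exp (-(Complex.I * (q.1:ℂ) * (q.2:ℂ))) := by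
      refine (hKcont.comp continuous_fst).mul (Complex.continuous_exp.comp ?_)
      exact (((continuous_const.mul (Complex.continuous_ofReal.comp continuous_fst)).mul
        (Complex.continuous_ofReal.comp continuous_snd)).neg)
    have hm : Measurable fun p : Ω × ℝ => (p.2, Z p.1) :=
      measurable_snd.prodMk (hZm.comp measurable_fst)
    exact (hc.measurable.comp hm).aestronglyMeasurable
  have hint1 : Integrable
      (fun p : Ω × ℝ => K p.2 * Complex.exp (-(Complex.I * (p.2:ℂ) * (Z p.1 : ℂ))))
      ((ℙ : Measure Ω).prod volume) := by
    rw [integrable_prod_iff hmeas1]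
    constructor
    · refine ae_of_all _ fun ω => ?_
      refine hKint.norm.mono' ?_ (ae_of_all _ fun t => ?_)
      · exact (hKcont.mul (hexpcont2 (Z ω))).aestronglyMeasurable
      · rw [norm_mul, norm_exp_neg_I_mul, mul_one]
    · refine (integrable_const (∫ t, ‖K t‖)).congr (ae_of_all _ fun ω => ?_)
      refine integral_congr_ae (ae_of_all _ fun t => ?_) |>.symm
      rw [norm_mul, norm_exp_neg_I_mul, mul_one]
  have hmeas2 : AEStronglyMeasurable
      (fun p : Ω × ℝ => ftR φ p.2 * Complex.exp (-(Complex.I * (p.2:ℂ) * (X p.1 : ℂ))))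
      ((ℙ : Measure Ω).prod volume) := by
    have hc : Continuous fun q : ℝ × ℝ =>
        ftR φ q.1 * Complex.exp (-(Complex.I * (q.1:ℂ) * (q.2:ℂ))) := by
      refine (hφft_cont.comp continuous_fst).mul (Complex.continuous_exp.comp ?_)
      exact (((continuous_const.mul (Complex.continuous_ofReal.comp continuous_fst)).mul
        (Complex.continuous_ofReal.comp continuous_snd)).neg)
    have hm : Measurable fun p : Ω × ℝ => (p.2, X p.1) :=
      measurable_snd.prodMk (hXm.comp measurable_fst)
    exact (hc.measurable.comp hm).aestronglyMeasurable
  have hint2 : Integrable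
      (fun p : Ω × ℝ => ftR φ p.2 * Complex.exp (-(Complex.I * (p.2:ℂ) * (X p.1 : ℂ))))
      ((ℙ : Measure Ω).prod volume) := by
    rw [integrable_prod_iff hmeas2]
    constructor
    · refine ae_of_all _ fun ω => ?_
      refine hftφ_int.norm.mono' ?_ (ae_of_all _ fun t => ?_)
      · exact (hφft_cont.mul (hexpcont2 (X ω))).aestronglyMeasurable
      · rw [norm_mul, norm_exp_neg_I_mul, mul_one]
    · refine (integrable_const (∫ t, ‖ftR φ t‖)).congr (ae_of_all _ fun ω => ?_)
      refine integral_congr_ae (ae_of_all _ fun t => ?_) |>.symm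
      rw [norm_mul, norm_exp_neg_I_mul, mul_one]
  -- the main computation
  have main : (∫ ω, ∫ t : ℝ, K t * Complex.exp (-(Complex.I * (t:ℂ) * (Z ω : ℂ))))
      = ((2 * π : ℝ) : ℂ) * ((∫ ω, φ (X ω)) : ℝ) := by
    calc (∫ ω, ∫ t : ℝ, K t * Complex.exp (-(Complex.I * (t:ℂ) * (Z ω : ℂ))))
        = ∫ t : ℝ, ∫ ω, K t * Complex.exp (-(Complex.I * (t:ℂ) * (Z ω : ℂ))) :=
          integral_integral_swap hint1
      _ = ∫ t : ℝ, ftR φ t * ∫ ω, Complex.exp (-(Complex.I * (t:ℂ) * (X ω : ℂ))) := by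
          refine integral_congr_ae (ae_of_all _ fun t => ?_)
          beta_reduce
          rw [integral_const_mul, hchar_split t, hKdef]
          simp only
          field_simp
          rw [mul_right_comm, mul_div_cancel_right₀ _ (hfεnz (-t))]
      _ = ∫ t : ℝ, ∫ ω, ftR φ t * Complex.exp (-(Complex.I * (t:ℂ) * (X ω : ℂ))) := by
          refine integral_congr_ae (ae_of_all _ fun t => ?_)
          beta_reduce
          rw [integral_const_mul]
      _ = ∫ ω, ∫ t : ℝ, ftR φ t * Complex.exp (-(Complex.I * (t:ℂ) * (X ω : ℂ))) :=
          (integral_integral_swap hint2).symm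
      _ = ∫ ω, ((2 * π : ℝ) : ℂ) * (φ (X ω) : ℂ) := by
          refine integral_congr_ae (ae_of_all _ fun ω => ?_)
          beta_reduce
          exact ftR_inversion hφc hφint hftφ_int (X ω)
      _ = ((2 * π : ℝ) : ℂ) * ((∫ ω, φ (X ω)) : ℝ) := by
          rw [integral_const_mul]
          congr 1
          exact integral_ofReal
  have hrw : (∫ ω, ∫ t : ℝ, ftR φ t * Complex.exp (-(Complex.I * (t : ℂ) * (Z ω : ℂ))) /
      ftR fε (-t)) = ((2 * π : ℝ) : ℂ) * ((∫ ω, φ (X ω)) : ℝ) := by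
    rw [← main]
    refine integral_congr_ae (ae_of_all _ fun ω => ?_)
    beta_reduce
    refine integral_congr_ae (ae_of_all _ fun t => ?_)
    beta_reduce
    rw [mul_div_right_comm]
  constructor
  · rw [hrw, ← mul_assoc]
    have : ((1 / (2 * π) : ℝ) : ℂ) * ((2 * π : ℝ) : ℂ) = 1 := by
      rw [← Complex.ofReal_mul, one_div_mul_cancel hπ, Complex.ofReal_one]
    rw [this, one_mul]
    exact integral_ofReal
  · rw [hrw]
    rw [show ((2 * π : ℝ) : ℂ) * ((∫ ω, φ (X ω)) : ℝ) = (((2 * π) * (∫ ω, φ (X ω)) : ℝ) : ℂ) by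
      push_cast; ring]
    rw [Complex.ofReal_re, ← mul_assoc]
    field_simp
end

section
/- Let X be a real random variable with E|X|^p < ∞ for some p > 2, and let Q be the inverse cadlag of the tail function t ↦ P(|X| > t), i.e. Q(u) = inf{t ≥ 0 : P(|X| > t) ≤ u}. Let (a_k)_{k≥1} be a sequence with 0 ≤ a_k ≤ 1 for all k. If Σ_{k≥1} k^{2/(p−2)} a_k < ∞, then Σ_{k≥1} ∫₀^{a_k} Q²(u) du < ∞. -/
open MeasureTheory ProbabilityTheory Filter Set
open scoped ProbabilityTheory Topology ENNReal NNReal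

/-- The inverse cadlag of the tail function `t ↦ P(|X| > t)`:
`Q(u) = inf {t ≥ 0 : P(|X| > t) ≤ u}`. -/
noncomputable def tailQuantile {Ω : Type*} [MeasureSpace Ω] (X : Ω → ℝ) (u : ℝ) : ℝ :=
  sInf {t : ℝ | 0 ≤ t ∧ (ℙ {ω | t < |X ω|}).toReal ≤ u}

section Aux
variable {Ω : Type*} [MeasureSpace Ω] [IsProbabilityMeasure (ℙ : Measure Ω)] {X : Ω → ℝ}

lemma tq_nonneg (X : Ω → ℝ) (u : ℝ) : 0 ≤ tailQuantile X u :=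
  Real.sInf_nonneg (fun _ ht => ht.1)

lemma tq_le {u t : ℝ} (ht : 0 ≤ t) (h : (ℙ {ω | t < |X ω|}).toReal ≤ u) : tailQuantile X u ≤ t :=
  csInf_le ⟨0, fun _ hs => hs.1⟩ ⟨ht, h⟩

lemma tq_lt_imp {u t : ℝ} (ht : 0 ≤ t) (h : t < tailQuantile X u) :
    u < (ℙ {ω | t < |X ω|}).toReal := by
  by_contra hc
  exact absurd (tq_le ht (not_lt.1 hc)) (not_le.2 h)

lemma tail_tendsto (hXm : Measurable X) :
    Tendsto (fun n : ℕ => ℙ {ω | (n:ℝ) < |X ω|}) atTop (𝓝 0) := by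
  have hs : ∀ n : ℕ, NullMeasurableSet {ω | (n:ℝ) < |X ω|} (ℙ : Measure Ω) :=
    fun n => (measurableSet_lt measurable_const hXm.abs).nullMeasurableSet
  have hm : Antitone (fun n : ℕ => {ω | (n:ℝ) < |X ω|}) := by
    intro m n hmn ω hω
    exact lt_of_le_of_lt (show (m:ℝ) ≤ n by exact_mod_cast hmn) hω
  have := tendsto_measure_iInter_atTop hs hm ⟨0, measure_ne_top _ _⟩
  have hempty : (⋂ n : ℕ, {ω | (n:ℝ) < |X ω|}) = ∅ := by
    ext ω
    simp only [mem_iInter, mem_setOf_eq, mem_empty_iff_false, iff_false, not_forall, not_lt]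
    obtain ⟨n, hn⟩ := exists_nat_ge (|X ω|)
    exact ⟨n, hn⟩
  rwa [hempty, measure_empty] at this

lemma tq_set_nonempty (hXm : Measurable X) {u : ℝ} (hu : 0 < u) :
    {t : ℝ | 0 ≤ t ∧ (ℙ {ω | t < |X ω|}).toReal ≤ u}.Nonempty := by
  have := (tail_tendsto (X := X) hXm).eventually_lt_const
    (show (0:ℝ≥0∞) < ENNReal.ofReal u from ENNReal.ofReal_pos.2 hu)
  obtain ⟨n, hn⟩ := this.exists
  exact ⟨n, Nat.cast_nonneg n, ENNReal.toReal_le_of_le_ofReal hu.le hn.le⟩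

lemma tq_antitoneOn (hXm : Measurable X) : AntitoneOn (tailQuantile X) (Ioi (0:ℝ)) := by
  intro u hu v hv huv
  exact csInf_le_csInf ⟨0, fun _ hs => hs.1⟩ (tq_set_nonempty hXm hu)
    (fun t ht => ⟨ht.1, ht.2.trans huv⟩)

lemma tq_measurable (hXm : Measurable X) : Measurable (tailQuantile X) := by
  apply measurable_of_Iio
  intro c
  have h1 : tailQuantile X ⁻¹' Iio c =
      ({u | tailQuantile X u < c} ∩ Iio 0) ∪ ({u | tailQuantile X u < c} ∩ {0}) ∪
      ({u | tailQuantile X u < c} ∩ Ioi 0) := by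
    ext u
    simp only [mem_preimage, mem_Iio, mem_union, mem_inter_iff, mem_setOf_eq, mem_singleton_iff,
      mem_Ioi]
    constructor
    · intro h
      rcases lt_trichotomy u 0 with h'|h'|h'
      · exact Or.inl (Or.inl ⟨h, h'⟩)
      · exact Or.inl (Or.inr ⟨h, h'⟩)
      · exact Or.inr ⟨h, h'⟩
    · rintro ((⟨h,_⟩|⟨h,_⟩)|⟨h,_⟩) <;> exact h
  rw [h1]
  apply MeasurableSet.union
  apply MeasurableSet.union
  · -- for u < 0 the set is empty, so tailQuantile u = 0
    have : ({u | tailQuantile X u < c} ∩ Iio 0) = if (0:ℝ) < c then Iio 0 else ∅ := by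
      ext u
      have hq : ∀ u : ℝ, u < 0 → tailQuantile X u = 0 := by
        intro u hu
        have : {t : ℝ | 0 ≤ t ∧ (ℙ {ω | t < |X ω|}).toReal ≤ u} = ∅ := by
          ext t
          simp only [mem_setOf_eq, mem_empty_iff_false, iff_false, not_and, not_le]
          intro _
          exact lt_of_lt_of_le hu ENNReal.toReal_nonneg
        rw [tailQuantile, this, Real.sInf_empty]
      by_cases hc : (0:ℝ) < c <;>
        simp only [hc, if_true, if_false, mem_inter_iff, mem_setOf_eq, mem_Iio,
          mem_empty_iff_false, iff_false]
      · constructor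
        · rintro ⟨_, h⟩; exact h
        · intro h; exact ⟨by rw [hq u h]; exact hc, h⟩
      · rintro ⟨h1, h2⟩
        rw [hq u h2] at h1
        exact hc h1
    rw [this]
    split <;> simp [measurableSet_Iio]
  · exact (Set.Subsingleton.measurableSet (fun x hx y hy => by
      rw [hx.2, hy.2]))
  · -- ordConnected
    apply Set.OrdConnected.measurableSet
    constructor
    intro u hu v hv w hw
    simp only [mem_inter_iff, mem_setOf_eq, mem_Ioi] at hu hv ⊢
    have hw1 : (0:ℝ) < w := lt_of_lt_of_le hu.2 hw.1
    refine ⟨lt_of_le_of_lt ?_ hu.1, hw1⟩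
    exact tq_antitoneOn hXm hu.2 hw1 hw.1

lemma tq_meas_le (hXm : Measurable X) {t : ℝ} (ht : 0 < t) :
    (volume.restrict (Ioc (0:ℝ) 1)) {u | t ≤ tailQuantile X u} ≤ ℙ {ω | t ≤ |X ω|} := by
  set s : ℕ → ℝ := fun n => t - t / (n + 1) with hs
  have hs_nonneg : ∀ n, 0 ≤ s n := by
    intro n
    have h1 : t / (n+1) ≤ t := by
      apply div_le_self ht.le
      have : (0:ℝ) ≤ n := Nat.cast_nonneg n
      linarith
    simp only [hs]; linarith
  have hs_lt : ∀ n, s n < t := by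
    intro n
    have : 0 < t / (n+1) := by positivity
    simp only [hs]; linarith
  have hs_tendsto : Tendsto s atTop (𝓝 t) := by
    have h1 : Tendsto (fun n : ℕ => t / (n + 1)) atTop (𝓝 0) := by
      apply Tendsto.div_atTop (tendsto_const_nhds (x := t) (f := atTop))
      have h2 : Tendsto (fun n : ℕ => ((n : ℝ))) atTop atTop := tendsto_natCast_atTop_atTop
      exact tendsto_atTop_add_const_right atTop 1 h2
    have := (tendsto_const_nhds : Tendsto (fun _ : ℕ => t) atTop (𝓝 t)).sub h1
    simpa using this
  -- intersection identity
  have hinter : (⋂ n : ℕ, {ω | s n < |X ω|}) = {ω | t ≤ |X ω|} := by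
    ext ω
    simp only [mem_iInter, mem_setOf_eq]
    constructor
    · intro h
      have : ∀ n, s n ≤ |X ω| := fun n => (h n).le
      exact le_of_tendsto hs_tendsto (Eventually.of_forall this)
    · intro h n
      exact lt_of_lt_of_le (hs_lt n) h
  have htend : Tendsto (fun n : ℕ => ℙ {ω | s n < |X ω|}) atTop (𝓝 (ℙ {ω | t ≤ |X ω|})) := by
    have hmeas : ∀ n : ℕ, NullMeasurableSet {ω | s n < |X ω|} (ℙ : Measure Ω) :=
      fun n => (measurableSet_lt measurable_const hXm.abs).nullMeasurableSet
    have hanti : Antitone (fun n : ℕ => {ω | s n < |X ω|}) := by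
      intro m n hmn ω hω
      have : s m ≤ s n := by
        simp only [hs]
        have h1 : (m:ℝ) + 1 ≤ (n:ℝ) + 1 := by exact_mod_cast Nat.succ_le_succ hmn
        have h2 : t / ((n:ℝ)+1) ≤ t / ((m:ℝ)+1) := by
          apply div_le_div_of_nonneg_left ht.le (by positivity) h1
        linarith
      exact lt_of_le_of_lt this hω
    have := tendsto_measure_iInter_atTop hmeas hanti ⟨0, measure_ne_top _ _⟩
    rwa [hinter] at this
  -- bound by each term
  apply ge_of_tendsto htend
  apply Eventually.of_forall
  intro n
  have hmeasQ : MeasurableSet {u : ℝ | t ≤ tailQuantile X u} :=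
    (tq_measurable hXm) measurableSet_Ici
  rw [Measure.restrict_apply hmeasQ]
  have hsubset : {u : ℝ | t ≤ tailQuantile X u} ∩ Ioc 0 1 ⊆
      Ioc 0 ((ℙ {ω | s n < |X ω|}).toReal) := by
    rintro u ⟨hu1, hu2, _⟩
    refine ⟨hu2, ?_⟩
    exact (tq_lt_imp (hs_nonneg n) (lt_of_lt_of_le (hs_lt n) hu1)).le
  calc volume ({u : ℝ | t ≤ tailQuantile X u} ∩ Ioc 0 1)
      ≤ volume (Ioc 0 ((ℙ {ω | s n < |X ω|}).toReal)) := measure_mono hsubset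
    _ = ENNReal.ofReal ((ℙ {ω | s n < |X ω|}).toReal) := by
        rw [Real.volume_Ioc, sub_zero]
    _ = ℙ {ω | s n < |X ω|} := ENNReal.ofReal_toReal (measure_ne_top _ _)

lemma tq_rpow_lintegral_lt_top (hXm : Measurable X) {p : ℝ} (hp : 0 < p)
    (hmom : Integrable (fun ω => |X ω| ^ p) ℙ) :
    ∫⁻ u in Ioc (0:ℝ) 1, ENNReal.ofReal (tailQuantile X u ^ p) < ⊤ := by
  have hQm : Measurable (tailQuantile X) := tq_measurable hXm
  have h1 : ∫⁻ u in Ioc (0:ℝ) 1, ENNReal.ofReal (tailQuantile X u ^ p) =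
      ENNReal.ofReal p * ∫⁻ t in Ioi (0:ℝ),
        (volume.restrict (Ioc (0:ℝ) 1)) {u | t ≤ tailQuantile X u} * ENNReal.ofReal (t ^ (p-1)) :=
    lintegral_rpow_eq_lintegral_meas_le_mul _
      (Eventually.of_forall (fun u => tq_nonneg X u)) hQm.aemeasurable hp
  have h2 : ∫⁻ ω, ENNReal.ofReal (|X ω| ^ p) ∂ℙ =
      ENNReal.ofReal p * ∫⁻ t in Ioi (0:ℝ),
        ℙ {ω | t ≤ |X ω|} * ENNReal.ofReal (t ^ (p-1)) :=
    lintegral_rpow_eq_lintegral_meas_le_mul _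
      (Eventually.of_forall (fun ω => abs_nonneg _)) hXm.abs.aemeasurable hp
  have h3 : ∫⁻ u in Ioc (0:ℝ) 1, ENNReal.ofReal (tailQuantile X u ^ p) ≤
      ∫⁻ ω, ENNReal.ofReal (|X ω| ^ p) ∂ℙ := by
    rw [h1, h2]
    apply mul_le_mul_right
    apply lintegral_mono_ae
    filter_upwards [self_mem_ae_restrict (measurableSet_Ioi : MeasurableSet (Ioi (0:ℝ)))]
    intro t ht
    exact mul_le_mul_left (tq_meas_le hXm ht) _
  have h4 : ∫⁻ ω, ENNReal.ofReal (|X ω| ^ p) ∂ℙ < ⊤ := hmom.lintegral_lt_top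
  exact lt_of_le_of_lt h3 h4

lemma sum_range_le_sum_finset (f : ℕ → ℝ) (hf : Monotone f) (S : Finset ℕ) :
    ∑ j ∈ Finset.range S.card, f j ≤ ∑ k ∈ S, f k := by
  induction S using Finset.induction_on_max with
  | empty => simp
  | insert a S ha ih =>
    have hcard : S.card ≤ a := by
      have : S ⊆ Finset.range a := fun b hb => Finset.mem_range.2 (ha b hb)
      simpa using Finset.card_le_card this
    have hnotmem : a ∉ S := fun h => lt_irrefl a (ha a h)
    rw [Finset.card_insert_of_notMem hnotmem, Finset.sum_insert hnotmem,
      Finset.sum_range_succ]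
    have := hf hcard
    linarith

lemma half_pow_le_sum_range (r : ℝ) (hr : 0 ≤ r) (n : ℕ) :
    ((n : ℝ)/2) ^ (r + 1) ≤ ∑ j ∈ Finset.range n, ((j : ℝ) + 1) ^ r := by
  have key : ∀ j ∈ Finset.Ico (n/2) n, ((n:ℝ)/2) ^ r ≤ ((j:ℝ)+1) ^ r := by
    intro j hj
    rw [Finset.mem_Ico] at hj
    apply Real.rpow_le_rpow (by positivity) _ hr
    have h0 : (n/2 : ℕ) ≤ j := hj.1
    have h2 : ((n/2 : ℕ) : ℝ) ≥ (n:ℝ)/2 - 1 := by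
      have hn : n ≤ n/2*2+1 := by omega
      have : (n:ℝ) ≤ ((n/2 : ℕ):ℝ)*2+1 := by exact_mod_cast hn
      linarith
    have : ((n/2:ℕ):ℝ) ≤ j := by exact_mod_cast h0
    linarith
  have hsub : Finset.Ico (n/2) n ⊆ Finset.range n := by
    intro j hj; rw [Finset.mem_Ico] at hj; exact Finset.mem_range.2 hj.2
  have h1 : ∑ j ∈ Finset.Ico (n/2) n, ((j:ℝ)+1)^r ≤ ∑ j ∈ Finset.range n, ((j:ℝ)+1)^r :=
    Finset.sum_le_sum_of_subset_of_nonneg hsub (by intro j _ _; positivity)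
  have h2 : ((Finset.Ico (n/2) n).card : ℝ) * ((n:ℝ)/2)^r ≤
      ∑ j ∈ Finset.Ico (n/2) n, ((j:ℝ)+1)^r := by
    calc ((Finset.Ico (n/2) n).card : ℝ) * ((n:ℝ)/2)^r
        = ∑ _j ∈ Finset.Ico (n/2) n, ((n:ℝ)/2)^r := by rw [Finset.sum_const]; ring
      _ ≤ _ := Finset.sum_le_sum key
  have hcard : (n:ℝ)/2 ≤ ((Finset.Ico (n/2) n).card : ℝ) := by
    rw [Nat.card_Ico]
    have h5 : ((n - n/2 : ℕ) : ℝ) = (n:ℝ) - ((n/2:ℕ):ℝ) := by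
      push_cast [Nat.cast_sub (Nat.div_le_self n 2)]; ring
    have h6 : ((n/2 : ℕ):ℝ) ≤ (n:ℝ)/2 := by
      have h7 := Nat.div_mul_le_self n 2
      have : ((n/2 : ℕ) * 2 : ℝ) ≤ n := by exact_mod_cast h7
      linarith
    linarith
  calc ((n:ℝ)/2)^(r+1) = ((n:ℝ)/2)^r * ((n:ℝ)/2) := by
        rw [Real.rpow_add_one' (by positivity) (by linarith)]
      _ ≤ ((n:ℝ)/2)^r * ((Finset.Ico (n/2) n).card : ℝ) := by
        apply mul_le_mul_of_nonneg_left hcard (by positivity)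
      _ ≤ ∑ j ∈ Finset.Ico (n/2) n, ((j:ℝ)+1)^r := by rw [mul_comm]; exact h2
      _ ≤ _ := h1

lemma card_rpow_le (r : ℝ) (hr : 0 ≤ r) (S : Finset ℕ) :
    ((S.card : ℝ)) ^ (r+1) ≤ 2^(r+1) * ∑ k ∈ S, ((k:ℝ)+1)^r := by
  have hmono : Monotone (fun j : ℕ => ((j:ℝ)+1)^r) := by
    intro i j hij
    have : (i:ℝ) ≤ j := by exact_mod_cast hij
    apply Real.rpow_le_rpow (by positivity) (by linarith) hr
  have h1 := half_pow_le_sum_range r hr S.card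
  have h2 := sum_range_le_sum_finset _ hmono S
  have h3 : ((S.card:ℝ)) ^ (r+1) = 2^(r+1) * (((S.card:ℝ))/2)^(r+1) := by
    rw [← Real.mul_rpow (by norm_num) (by positivity)]
    ring_nf
  rw [h3]
  have h4 : (0:ℝ) ≤ 2^(r+1) := by positivity
  nlinarith [h1.trans h2]

lemma count_lintegral_lt_top {p : ℝ} (hp : 2 < p) (a : ℕ → ℝ)
    (ha0 : ∀ k, 0 ≤ a k) (ha1 : ∀ k, a k ≤ 1)
    (hsum : Summable (fun k : ℕ => ((k + 1 : ℕ) : ℝ) ^ (2 / (p - 2)) * a (k + 1))) :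
    ∫⁻ u in Ioc (0:ℝ) 1,
      (∑' k : ℕ, (Ioc (0:ℝ) (a (k+1))).indicator (fun _ => (1:ℝ≥0∞)) u) ^ (p/(p-2)) < ⊤ := by
  set r : ℝ := 2 / (p - 2) with hrdef
  have hp2 : (0:ℝ) < p - 2 := by linarith
  have hr : 0 < r := by positivity
  have hq : p / (p - 2) = r + 1 := by
    field_simp [hrdef]
    rw [hrdef]; field_simp; ring
  -- a (k+1) tends to zero
  have hterm : Tendsto (fun k : ℕ => ((k + 1 : ℕ) : ℝ) ^ r * a (k + 1)) atTop (𝓝 0) :=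
    hsum.tendsto_atTop_zero
  have ha_to0 : Tendsto (fun k : ℕ => a (k + 1)) atTop (𝓝 0) := by
    apply squeeze_zero (fun k => ha0 (k+1)) _ hterm
    intro k
    have h1 : (1:ℝ) ≤ ((k + 1 : ℕ) : ℝ) ^ r := by
      apply Real.one_le_rpow _ hr.le
      exact_mod_cast Nat.one_le_iff_ne_zero.2 (Nat.succ_ne_zero k)
    nlinarith [ha0 (k+1)]
  -- pointwise bound
  have hpoint : ∀ u ∈ Ioc (0:ℝ) 1,
      (∑' k : ℕ, (Ioc (0:ℝ) (a (k+1))).indicator (fun _ => (1:ℝ≥0∞)) u) ^ (r+1) ≤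
      ENNReal.ofReal (2^(r+1)) *
        ∑' k : ℕ, ENNReal.ofReal (((k+1:ℕ):ℝ)^r) *
          (Ioc (0:ℝ) (a (k+1))).indicator (fun _ => (1:ℝ≥0∞)) u := by
    intro u hu
    have hSfin : {k : ℕ | u ∈ Ioc (0:ℝ) (a (k+1))}.Finite := by
      have hev : ∀ᶠ k in atTop, a (k+1) < u :=
        ha_to0.eventually_lt_const hu.1
      obtain ⟨K, hK⟩ := hev.exists_forall_of_atTop
      apply Set.Finite.subset (finite_Iio K)
      intro k hk
      simp only [mem_setOf_eq, mem_Ioc] at hk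
      by_contra hlt
      simp only [mem_Iio, not_lt] at hlt
      exact absurd hk.2 (not_le.2 (hK k hlt))
    set Sf := hSfin.toFinset with hSf
    have hind : ∀ k : ℕ, (Ioc (0:ℝ) (a (k+1))).indicator (fun _ => (1:ℝ≥0∞)) u
        = if k ∈ Sf then 1 else 0 := by
      intro k
      by_cases h : u ∈ Ioc (0:ℝ) (a (k+1))
      · rw [Set.indicator_of_mem h, if_pos (by simpa [hSf] using h)]
      · rw [Set.indicator_of_notMem h, if_neg (by simpa [hSf] using h)]
    have hNval : (∑' k : ℕ, (Ioc (0:ℝ) (a (k+1))).indicator (fun _ => (1:ℝ≥0∞)) u)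
        = (Sf.card : ℝ≥0∞) := by
      rw [tsum_eq_sum (s := Sf) (by intro k hk; rw [hind k, if_neg hk])]
      rw [Finset.sum_congr rfl (fun k hk => by rw [hind k, if_pos hk])]
      simp
    rw [hNval]
    -- cast the real inequality
    have hreal := card_rpow_le r hr.le Sf
    have hcast : ((Sf.card : ℝ≥0∞))^(r+1) = ENNReal.ofReal ((Sf.card:ℝ)^(r+1)) := by
      rw [← ENNReal.ofReal_natCast, ENNReal.ofReal_rpow_of_nonneg (Nat.cast_nonneg _) (by linarith)]
    rw [hcast]
    calc ENNReal.ofReal ((Sf.card:ℝ)^(r+1))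
        ≤ ENNReal.ofReal (2^(r+1) * ∑ k ∈ Sf, ((k:ℝ)+1)^r) := ENNReal.ofReal_le_ofReal hreal
      _ = ENNReal.ofReal (2^(r+1)) * ENNReal.ofReal (∑ k ∈ Sf, ((k:ℝ)+1)^r) := by
          rw [ENNReal.ofReal_mul (by positivity)]
      _ = ENNReal.ofReal (2^(r+1)) * ∑ k ∈ Sf, ENNReal.ofReal (((k:ℝ)+1)^r) := by
          rw [ENNReal.ofReal_sum_of_nonneg (fun k _ => by positivity)]
      _ ≤ _ := by
          apply mul_le_mul_right
          calc ∑ k ∈ Sf, ENNReal.ofReal (((k:ℝ)+1)^r)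
              = ∑ k ∈ Sf, ENNReal.ofReal (((k+1:ℕ):ℝ)^r) *
                  (Ioc (0:ℝ) (a (k+1))).indicator (fun _ => (1:ℝ≥0∞)) u := by
                apply Finset.sum_congr rfl
                intro k hk
                rw [hind k, if_pos hk, mul_one]
                norm_num
            _ ≤ _ := ENNReal.sum_le_tsum Sf
  -- integrate the pointwise bound
  rw [hq]
  have hmono : ∫⁻ u in Ioc (0:ℝ) 1,
      (∑' k : ℕ, (Ioc (0:ℝ) (a (k+1))).indicator (fun _ => (1:ℝ≥0∞)) u) ^ (r+1) ≤
      ∫⁻ u in Ioc (0:ℝ) 1, ENNReal.ofReal (2^(r+1)) *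
        ∑' k : ℕ, ENNReal.ofReal (((k+1:ℕ):ℝ)^r) *
          (Ioc (0:ℝ) (a (k+1))).indicator (fun _ => (1:ℝ≥0∞)) u := by
    apply lintegral_mono_ae
    filter_upwards [self_mem_ae_restrict (measurableSet_Ioc : MeasurableSet (Ioc (0:ℝ) 1))]
    exact hpoint
  apply lt_of_le_of_lt hmono
  rw [lintegral_const_mul]
  swap
  · apply Measurable.ennreal_tsum
    intro k
    exact (measurable_const.indicator measurableSet_Ioc).const_mul _
  rw [lintegral_tsum (fun k =>
    ((measurable_const.indicator measurableSet_Ioc).const_mul _).aemeasurable)]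
  have hiter : ∀ k : ℕ, ∫⁻ u in Ioc (0:ℝ) 1,
      ENNReal.ofReal (((k+1:ℕ):ℝ)^r) * (Ioc (0:ℝ) (a (k+1))).indicator (fun _ => (1:ℝ≥0∞)) u
      = ENNReal.ofReal (((k+1:ℕ):ℝ)^r) * ENNReal.ofReal (a (k+1)) := by
    intro k
    rw [lintegral_const_mul _ (measurable_const.indicator measurableSet_Ioc)]
    congr 1
    rw [lintegral_indicator measurableSet_Ioc, setLIntegral_one,
      Measure.restrict_apply measurableSet_Ioc]
    have : Ioc (0:ℝ) (a (k+1)) ∩ Ioc (0:ℝ) 1 = Ioc (0:ℝ) (a (k+1)) := by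
      apply inter_eq_self_of_subset_left
      exact Ioc_subset_Ioc le_rfl (ha1 (k+1))
    rw [this, Real.volume_Ioc, sub_zero]
  simp_rw [hiter]
  have hfin : ∑' k : ℕ, ENNReal.ofReal (((k+1:ℕ):ℝ)^r) * ENNReal.ofReal (a (k+1)) ≠ ⊤ := by
    have : ∀ k : ℕ, ENNReal.ofReal (((k+1:ℕ):ℝ)^r) * ENNReal.ofReal (a (k+1))
        = ENNReal.ofReal (((k+1:ℕ):ℝ)^r * a (k+1)) := by
      intro k
      rw [← ENNReal.ofReal_mul (by positivity)]
    simp_rw [this]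
    rw [← ENNReal.ofReal_tsum_of_nonneg (fun k => mul_nonneg (by positivity) (ha0 (k+1))) hsum]
    exact ENNReal.ofReal_ne_top
  exact ENNReal.mul_lt_top ENNReal.ofReal_lt_top hfin.lt_top


end Aux

/-- If `E|X|^p < ∞` for some `p > 2`, `(a_k)_{k ≥ 1}` takes values in `[0,1]`
and `Σ_{k≥1} k^{2/(p−2)} a_k < ∞`, then `Σ_{k≥1} ∫₀^{a_k} Q²(u) du < ∞`, where `Q` is the
inverse cadlag of the tail function of `|X|`. -/
theorem stmt6 {Ω : Type*} [MeasureSpace Ω] [IsProbabilityMeasure (ℙ : Measure Ω)]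
    (X : Ω → ℝ) (hXm : Measurable X) (p : ℝ) (hp : 2 < p)
    (hmom : Integrable (fun ω => |X ω| ^ p) ℙ)
    (a : ℕ → ℝ) (ha0 : ∀ k, 0 ≤ a k) (ha1 : ∀ k, a k ≤ 1)
    (hsum : Summable (fun k : ℕ => ((k + 1 : ℕ) : ℝ) ^ (2 / (p - 2)) * a (k + 1))) :
    (∑' k : ℕ, ∫⁻ u in Ioc (0 : ℝ) (a (k + 1)),
        ENNReal.ofReal ((tailQuantile X u) ^ 2)) ≠ ⊤ := by
  set g : ℝ → ℝ≥0∞ := fun u => ENNReal.ofReal ((tailQuantile X u) ^ 2) with hg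
  have hgm : Measurable g := ((tq_measurable hXm).pow_const 2).ennreal_ofReal
  set N : ℝ → ℝ≥0∞ :=
    fun u => ∑' k : ℕ, (Ioc (0:ℝ) (a (k+1))).indicator (fun _ => (1:ℝ≥0∞)) u with hN
  have hNm : Measurable N :=
    Measurable.ennreal_tsum (fun k => measurable_const.indicator measurableSet_Ioc)
  -- Step A: each term as an indicator integral over Ioc 0 1
  have hA : ∀ k : ℕ, ∫⁻ u in Ioc (0 : ℝ) (a (k + 1)), g u =
      ∫⁻ u in Ioc (0:ℝ) 1, (Ioc (0:ℝ) (a (k+1))).indicator g u := by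
    intro k
    rw [lintegral_indicator measurableSet_Ioc, Measure.restrict_restrict measurableSet_Ioc]
    congr 1
    rw [inter_eq_self_of_subset_left (Ioc_subset_Ioc le_rfl (ha1 (k+1)))]
  -- Step B: swap tsum and integral
  have hB : (∑' k : ℕ, ∫⁻ u in Ioc (0 : ℝ) (a (k + 1)), g u) =
      ∫⁻ u in Ioc (0:ℝ) 1, N u * g u := by
    simp_rw [hA]
    rw [← lintegral_tsum (fun k => (hgm.indicator measurableSet_Ioc).aemeasurable)]
    apply lintegral_congr
    intro u
    have : ∀ k : ℕ, (Ioc (0:ℝ) (a (k+1))).indicator g u =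
        (Ioc (0:ℝ) (a (k+1))).indicator (fun _ => (1:ℝ≥0∞)) u * g u := by
      intro k
      by_cases h : u ∈ Ioc (0:ℝ) (a (k+1)) <;>
        simp [Set.indicator_of_mem, Set.indicator_of_notMem, h]
    simp_rw [this]
    rw [ENNReal.tsum_mul_right]
  rw [hB]
  -- Step D: Hölder
  have hp2 : (0:ℝ) < p - 2 := by linarith
  have hpq : Real.HolderConjugate (p/(p-2)) (p/2) := by
    rw [Real.holderConjugate_iff]
    constructor
    · rw [lt_div_iff₀ hp2]; linarith
    · field_simp; ring
  have hHolder := ENNReal.lintegral_mul_le_Lp_mul_Lq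
    (volume.restrict (Ioc (0:ℝ) 1)) hpq hNm.aemeasurable hgm.aemeasurable
  apply ne_top_of_le_ne_top _ hHolder
  -- finiteness of both factors
  have hfac1 : (∫⁻ u in Ioc (0:ℝ) 1, N u ^ (p/(p-2))) ≠ ⊤ :=
    (count_lintegral_lt_top hp a ha0 ha1 hsum).ne
  have hfac2 : (∫⁻ u in Ioc (0:ℝ) 1, g u ^ (p/2)) ≠ ⊤ := by
    have hgeq : ∀ u : ℝ, g u ^ (p/2) = ENNReal.ofReal ((tailQuantile X u) ^ p) := by
      intro u
      rw [hg]
      rw [ENNReal.ofReal_rpow_of_nonneg (sq_nonneg _) (by positivity)]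
      congr 1
      rw [← Real.rpow_natCast (tailQuantile X u) 2,
        ← Real.rpow_mul (tq_nonneg X u)]
      norm_num
      congr 1
      field_simp
    simp_rw [hgeq]
    exact (tq_rpow_lintegral_lt_top hXm (by linarith) hmom).ne
  exact ENNReal.mul_ne_top
    (ENNReal.rpow_ne_top_of_nonneg (by positivity) hfac1)
    (ENNReal.rpow_ne_top_of_nonneg (by positivity) hfac2)
end

section
/- Let X be a real random variable with E|X|^p < ∞ for some p > 2. Define G(t) = t^{−1} E(X² 1_{X² > t}) for t > 0, and let G^{−1} be its inverse cadlag, G^{−1}(v) = inf{t > 0 : G(t) ≤ v}. Let (t_k)_{k≥1} be a sequence of positive reals. If Σ_{k≥1} t_k^{(p−2)/p} < ∞, then Σ_{k≥1} G^{−1}(t_k) · t_k < ∞. -/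
open MeasureTheory ProbabilityTheory Filter Set
open scoped ProbabilityTheory

/-- `G(t) = t⁻¹ E(X² 1_{X² > t})` for `t > 0`. -/
noncomputable def Gfun {Ω : Type*} [MeasureSpace Ω] (X : Ω → ℝ) (t : ℝ) : ℝ :=
  t⁻¹ * ∫ ω, (X ω) ^ 2 * (if t < (X ω) ^ 2 then 1 else 0)

/-- The inverse cadlag of `G`: `G⁻¹(v) = inf {t > 0 : G(t) ≤ v}`. -/
noncomputable def GfunInv {Ω : Type*} [MeasureSpace Ω] (X : Ω → ℝ) (v : ℝ) : ℝ :=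
  sInf {t : ℝ | 0 < t ∧ Gfun X t ≤ v}

/-- If `E|X|^p < ∞` for some `p > 2` and `(t_k)_{k≥1}` are positive reals with
`Σ_{k≥1} t_k^{(p−2)/p} < ∞`, then `Σ_{k≥1} G⁻¹(t_k) · t_k < ∞`. -/
theorem stmt7 {Ω : Type*} [MeasureSpace Ω] [IsProbabilityMeasure (ℙ : Measure Ω)]
    (X : Ω → ℝ) (hXm : Measurable X) (p : ℝ) (hp : 2 < p)
    (hmom : Integrable (fun ω => |X ω| ^ p) ℙ)
    (t : ℕ → ℝ) (ht : ∀ k, 0 < t k)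
    (hsum : Summable (fun k : ℕ => t (k + 1) ^ ((p - 2) / p))) :
    Summable (fun k : ℕ => GfunInv X (t (k + 1)) * t (k + 1)) := by
  have hp0 : (0:ℝ) < p := by linarith
  set C := ∫ ω, |X ω| ^ p with hCdef
  have hC0 : 0 ≤ C := integral_nonneg fun ω => Real.rpow_nonneg (abs_nonneg _) p
  have hC1 : (0:ℝ) < C + 1 := by linarith
  -- pointwise and integral bound on G
  have hG : ∀ s : ℝ, 0 < s → Gfun X s ≤ C * s ^ (-(p/2)) := by
    intro s hs
    have hptw : ∀ ω, (X ω) ^ 2 * (if s < (X ω) ^ 2 then 1 else 0)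
        ≤ |X ω| ^ p * s ^ ((2 - p)/2) := by
      intro ω
      by_cases h : s < (X ω) ^ 2
      · simp only [h, if_pos, mul_one]
        set a := |X ω| with ha
        have hx2 : (0:ℝ) < (X ω)^2 := lt_trans hs h
        have ha0 : 0 < a := abs_pos.mpr (by intro h0; rw [h0] at hx2; norm_num at hx2)
        have hsq : (X ω)^2 = a^2 := (sq_abs _).symm
        have h1 : s ^ ((2 - p)/2) ≥ (a^2 : ℝ) ^ ((2 - p)/2) := by
          apply Real.rpow_le_rpow_of_nonpos hs
          · rw [← hsq]; exact h.le
          · have : (2 - p) < 0 := by linarith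
            linarith [div_nonpos_of_nonpos_of_nonneg this.le (by norm_num : (0:ℝ) ≤ 2)]
        have h2 : a ^ p * (a^2 : ℝ) ^ ((2 - p)/2) = a ^ 2 := by
          rw [← Real.rpow_natCast a 2, ← Real.rpow_mul ha0.le, ← Real.rpow_add ha0]
          norm_num
          rw [show p + 2*((2-p)/2) = ((2:ℕ):ℝ) by push_cast; ring, Real.rpow_natCast]
        calc (X ω)^2 = a ^ p * (a^2 : ℝ) ^ ((2 - p)/2) := by rw [h2, hsq]
          _ ≤ a ^ p * s ^ ((2 - p)/2) := by
              apply mul_le_mul_of_nonneg_left h1 (Real.rpow_nonneg ha0.le p)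
      · simp only [h, if_neg, mul_zero, not_false_iff]
        positivity
    have hmble : Measurable fun ω => (X ω) ^ 2 * (if s < (X ω) ^ 2 then 1 else 0) := by
      exact (hXm.pow_const 2).mul
        (Measurable.ite (measurableSet_lt measurable_const (hXm.pow_const 2))
          measurable_const measurable_const)
    have hint2 : Integrable (fun ω => |X ω| ^ p * s ^ ((2 - p)/2)) ℙ := hmom.mul_const _
    have hint1 : Integrable (fun ω => (X ω) ^ 2 * (if s < (X ω) ^ 2 then 1 else 0)) ℙ := by
      refine hint2.mono' hmble.aestronglyMeasurable (ae_of_all _ fun ω => ?_)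
      rw [Real.norm_eq_abs, abs_of_nonneg (by positivity)]
      exact hptw ω
    have hle := integral_mono hint1 hint2 hptw
    rw [integral_mul_const] at hle
    have : Gfun X s ≤ s⁻¹ * (C * s ^ ((2 - p)/2)) := by
      unfold Gfun
      exact mul_le_mul_of_nonneg_left hle (by positivity)
    refine this.trans_eq ?_
    rw [← Real.rpow_neg_one s, mul_comm (s ^ (-1:ℝ)), mul_assoc,
      ← Real.rpow_add hs]
    ring_nf
  -- bound on GfunInv
  have hGinv : ∀ v : ℝ, 0 < v → GfunInv X v ≤ ((C+1)/v) ^ (2/p) := by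
    intro v hv
    have ht0 : (0:ℝ) < ((C+1)/v) ^ (2/p) := Real.rpow_pos_of_pos (by positivity) _
    have hmem : ((C+1)/v) ^ (2/p) ∈ {s : ℝ | 0 < s ∧ Gfun X s ≤ v} := by
      refine ⟨ht0, ?_⟩
      have h1 := hG _ ht0
      have h2 : (((C+1)/v) ^ (2/p)) ^ (-(p/2)) = v / (C+1) := by
        rw [← Real.rpow_mul (by positivity)]
        have : (2/p) * (-(p/2)) = -1 := by field_simp
        rw [this, Real.rpow_neg_one, inv_div]
      rw [h2] at h1
      refine h1.trans ?_
      rw [div_eq_inv_mul, ← mul_assoc]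
      calc C * (C+1)⁻¹ * v ≤ 1 * v := by
            apply mul_le_mul_of_nonneg_right _ hv.le
            rw [mul_inv_le_iff₀ hC1, one_mul]; linarith
        _ = v := one_mul v
    exact csInf_le ⟨0, fun x hx => hx.1.le⟩ hmem
  have hGinv0 : ∀ v : ℝ, 0 ≤ GfunInv X v := fun v =>
    Real.sInf_nonneg fun x hx => hx.1.le
  -- comparison
  apply Summable.of_nonneg_of_le
  · intro k; exact mul_nonneg (hGinv0 _) (ht _).le
  · intro k
    have hv := ht (k+1)
    calc GfunInv X (t (k+1)) * t (k+1)
        ≤ ((C+1)/ t (k+1)) ^ (2/p) * t (k+1) :=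
          mul_le_mul_of_nonneg_right (hGinv _ hv) hv.le
      _ = (C+1) ^ (2/p) * t (k+1) ^ ((p-2)/p) := by
          rw [Real.div_rpow hC1.le hv.le, div_mul_eq_mul_div, mul_div_assoc]
          congr 1
          rw [div_eq_iff (ne_of_gt (Real.rpow_pos_of_pos hv _)), ← Real.rpow_add hv,
            show (p-2)/p + 2/p = 1 by field_simp; ring, Real.rpow_one]
  · exact (hsum.mul_left ((C+1) ^ (2/p)))
end

section
/- Let σ > 0, N(x) = exp(−x²/(4σ²)), and p_j(x) = x^j for j = 0,1,2. For the Laplace error density with variance σ², whose Fourier transform is f_ε*(t) = 1/(1 + σ²t²/2), define I_j(z) = (1/2π) Re ∫ (p_j N)*(t) e^{−itz} (1 + σ²t²/2) dt. Then for all z ∈ ℝ: I₀(z) = [5/4 − z²/(8σ²)] e^{−z²/(4σ²)}, I₁(z) = [7z/4 − z³/(8σ²)] e^{−z²/(4σ²)}, and I₂(z) = [−σ² + 9z²/4 − z⁴/(8σ²)] e^{−z²/(4σ²)}. -/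
open MeasureTheory Set

/-- The deconvolution integrals `I_j` for the Gaussian weight `N(x) = exp(−x²/(4σ²))`,
monomials `p_j(x) = x^j` and Laplace error with Fourier transform `1/(1 + σ²t²/2)`:
`I_j(z) = (1/2π) Re ∫ (p_j N)*(t) e^{−itz} (1 + σ²t²/2) dt`. -/
noncomputable def ILap (σ : ℝ) (j : ℕ) (z : ℝ) : ℝ :=
  (1 / (2 * Real.pi)) *
    (∫ t : ℝ, ftR (fun x => x ^ j * Real.exp (-(x ^ 2) / (4 * σ ^ 2))) t *
      Complex.exp (-(Complex.I * (t : ℂ) * (z : ℂ))) *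
      ((1 + σ ^ 2 * t ^ 2 / 2 : ℝ) : ℂ)).re

section Stmt12Aux
open Complex Filter Real

noncomputable def Eg (b r : ℝ) (x : ℝ) : ℂ := Complex.exp (-(b:ℂ) * x ^ 2 + Complex.I * r * x)

noncomputable def Mg (b r : ℝ) (k : ℕ) : ℂ := ∫ x : ℝ, (x:ℂ) ^ k * Eg b r x

lemma norm_Eg (b r : ℝ) (k : ℕ) (x : ℝ) :
    ‖(x:ℂ) ^ k * Eg b r x‖ = |x| ^ k * Real.exp (-b * x ^ 2) := by
  have h : (-(b:ℂ) * x ^ 2 + Complex.I * r * x).re = -b * x ^ 2 := by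
    simp [pow_two]
  rw [norm_mul, norm_pow, Complex.norm_real, Real.norm_eq_abs, Eg,
    Complex.norm_exp, h]

lemma integrable_pow_gauss {b : ℝ} (hb : 0 < b) (k : ℕ) :
    Integrable (fun x : ℝ => x ^ k * Real.exp (-b * x ^ 2)) := by
  have := integrable_rpow_mul_exp_neg_mul_sq hb (s := (k : ℝ))
    ((neg_lt_zero.mpr one_pos).trans_le (Nat.cast_nonneg k))
  simpa [Real.rpow_natCast] using this

lemma intEg {b : ℝ} (hb : 0 < b) (r : ℝ) (k : ℕ) :
    Integrable (fun x : ℝ => (x:ℂ) ^ k * Eg b r x) := by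
  refine ((integrable_pow_gauss hb k).abs.mono' ?_ ?_)
  · apply Continuous.aestronglyMeasurable
    apply Continuous.mul (by fun_prop)
    exact Complex.continuous_exp.comp (by fun_prop)
  · refine Eventually.of_forall fun x => ?_
    rw [norm_Eg, abs_mul, _root_.abs_pow, abs_of_pos (Real.exp_pos _)]

lemma tendsto_Eg_aux {b : ℝ} (hb : 0 < b) (k : ℕ) :
    Tendsto (fun x : ℝ => |x| ^ k * Real.exp (-b * x ^ 2)) atTop (nhds 0) := by
  have h1 : Tendsto (fun u : ℝ => u ^ ((k : ℝ)/2) * Real.exp (-b * u)) atTop (nhds 0) :=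
    tendsto_rpow_mul_exp_neg_mul_atTop_nhds_zero _ b hb
  have h2 : Tendsto (fun x : ℝ => x ^ 2) atTop atTop := tendsto_pow_atTop two_ne_zero
  refine (h1.comp h2).congr fun x => ?_
  simp only [Function.comp]
  congr 1
  calc ((x:ℝ)^2) ^ ((k:ℝ)/2) = (|x| ^ (2:ℕ)) ^ ((k:ℝ)/2) := by rw [_root_.sq_abs]
    _ = (|x| ^ ((2:ℕ):ℝ)) ^ ((k:ℝ)/2) := by rw [Real.rpow_natCast]
    _ = |x| ^ (((2:ℕ):ℝ) * ((k:ℝ)/2)) := by rw [← Real.rpow_mul (abs_nonneg x)]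
    _ = |x| ^ ((k:ℝ)) := by rw [show (((2:ℕ):ℝ) * ((k:ℝ)/2)) = (k:ℝ) by push_cast; ring]
    _ = |x| ^ k := Real.rpow_natCast _ _

lemma tendsto_Eg_aux_bot {b : ℝ} (hb : 0 < b) (k : ℕ) :
    Tendsto (fun x : ℝ => |x| ^ k * Real.exp (-b * x ^ 2)) atBot (nhds 0) := by
  have := (tendsto_Eg_aux hb k).comp tendsto_neg_atBot_atTop
  refine this.congr fun x => ?_
  simp [Function.comp, neg_pow]

lemma tendsto_Eg_top {b : ℝ} (hb : 0 < b) (r : ℝ) (k : ℕ) :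
    Tendsto (fun x : ℝ => (x:ℂ) ^ k * Eg b r x) atTop (nhds 0) := by
  rw [tendsto_zero_iff_norm_tendsto_zero]
  simp only [norm_Eg]
  exact tendsto_Eg_aux hb k

lemma tendsto_Eg_bot {b : ℝ} (hb : 0 < b) (r : ℝ) (k : ℕ) :
    Tendsto (fun x : ℝ => (x:ℂ) ^ k * Eg b r x) atBot (nhds 0) := by
  rw [tendsto_zero_iff_norm_tendsto_zero]
  simp only [norm_Eg]
  exact tendsto_Eg_aux_bot hb k

lemma integral_deriv_zero {F F' : ℝ → ℂ} (hd : ∀ x, HasDerivAt F (F' x) x)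
    (hi : Integrable F') (ht : Tendsto F atTop (nhds 0)) (hb : Tendsto F atBot (nhds 0)) :
    ∫ x : ℝ, F' x = 0 := by
  rw [← intervalIntegral.integral_Iic_add_Ioi (b := (0:ℝ)) hi.integrableOn hi.integrableOn]
  rw [MeasureTheory.integral_Iic_of_hasDerivAt_of_tendsto' (fun x _ => hd x) hi.integrableOn hb,
    MeasureTheory.integral_Ioi_of_hasDerivAt_of_tendsto' (fun x _ => hd x) hi.integrableOn ht]
  ring

lemma hasDerivAt_Eg (b r : ℝ) (k : ℕ) (x : ℝ) :
    HasDerivAt (fun y : ℝ => (y:ℂ) ^ k * Eg b r y)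
      ((k:ℂ) * (x:ℂ) ^ (k-1) * Eg b r x + (Complex.I * r) * ((x:ℂ) ^ k * Eg b r x)
        - (2*(b:ℂ)) * ((x:ℂ) ^ (k+1) * Eg b r x)) x := by
  have hg : ∀ z : ℂ, HasDerivAt (fun w : ℂ => w ^ k * Complex.exp (-(b:ℂ) * w ^ 2 + Complex.I * r * w))
      ((k:ℂ) * z ^ (k-1) * Complex.exp (-(b:ℂ) * z ^ 2 + Complex.I * r * z)
        + z ^ k * (Complex.exp (-(b:ℂ) * z ^ 2 + Complex.I * r * z) * (-(b:ℂ) * (2 * z) + Complex.I * r))) z := by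
    intro z
    have he : HasDerivAt (fun w : ℂ => -(b:ℂ) * w ^ 2 + Complex.I * r * w)
        (-(b:ℂ) * (2 * z) + Complex.I * r) z := by
      have h1 : HasDerivAt (fun w : ℂ => w ^ 2) (2 * z) z := by
        simpa using hasDerivAt_pow 2 z
      have := (h1.const_mul (-(b:ℂ))).add ((hasDerivAt_id z).const_mul (Complex.I * (r:ℂ)))
      exact this.congr_deriv (by ring)
    exact (hasDerivAt_pow k z).mul he.cexp
  have := (hg (x:ℂ)).comp_ofReal
  convert this using 1
  · rfl
  show _ = (k:ℂ) * (x:ℂ) ^ (k-1) * Eg b r x + (x:ℂ) ^ k * (Eg b r x * (-(b:ℂ) * (2 * x) + Complex.I * r))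
  rw [pow_succ]
  ring

lemma Mg_rec {b : ℝ} (hb : 0 < b) (r : ℝ) (k : ℕ) :
    Mg b r (k+1) = ((k:ℂ) * Mg b r (k-1) + Complex.I * r * Mg b r k) / (2*b) := by
  have hi : Integrable (fun x : ℝ => (k:ℂ) * ((x:ℂ) ^ (k-1) * Eg b r x)
      + (Complex.I * r) * ((x:ℂ) ^ k * Eg b r x)
      - (2*(b:ℂ)) * ((x:ℂ) ^ (k+1) * Eg b r x)) :=
    (((intEg hb r (k-1)).const_mul _).add ((intEg hb r k).const_mul _)).sub
      ((intEg hb r (k+1)).const_mul _)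
  have h0 : ∫ x : ℝ, ((k:ℂ) * ((x:ℂ) ^ (k-1) * Eg b r x)
      + (Complex.I * r) * ((x:ℂ) ^ k * Eg b r x)
      - (2*(b:ℂ)) * ((x:ℂ) ^ (k+1) * Eg b r x)) = 0 := by
    apply integral_deriv_zero (F := fun y : ℝ => (y:ℂ) ^ k * Eg b r y) _ hi
      (tendsto_Eg_top hb r k) (tendsto_Eg_bot hb r k)
    intro x
    have := hasDerivAt_Eg b r k x
    convert this using 1
    ring
  have hAB : Integrable (fun x : ℝ => (k:ℂ) * ((x:ℂ) ^ (k-1) * Eg b r x)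
      + (Complex.I * r) * ((x:ℂ) ^ k * Eg b r x)) := by
    exact ((intEg hb r (k-1)).const_mul ((k:ℕ):ℂ)).add ((intEg hb r k).const_mul (Complex.I * r))
  have h0' : (k:ℂ) * Mg b r (k-1) + Complex.I * r * Mg b r k - 2*(b:ℂ) * Mg b r (k+1) = 0 := by
    rw [Mg, Mg, Mg, ← integral_const_mul, ← integral_const_mul, ← integral_const_mul,
      ← integral_add ((intEg hb r (k-1)).const_mul _) ((intEg hb r k).const_mul _),
      ← integral_sub hAB ((intEg hb r (k+1)).const_mul _)]
    exact h0
  have hb' : (2*(b:ℂ)) ≠ 0 := by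
    simp [Complex.ofReal_ne_zero, hb.ne']
  rw [eq_div_iff hb']
  linear_combination -h0'

lemma Mg_zero {b : ℝ} (hb : 0 < b) (r : ℝ) :
    Mg b r 0 = (Real.sqrt (Real.pi / b) : ℂ) * Complex.exp (-(r:ℂ)^2 / (4*b)) := by
  have h := fourierIntegral_gaussian (b := (b:ℂ)) (by simpa using hb) (r:ℂ)
  have h2 : Mg b r 0 = ∫ x : ℝ, Complex.exp (Complex.I * r * x) * Complex.exp (-(b:ℂ) * x ^ 2) := by
    rw [Mg]
    congr 1
    ext x
    rw [← Complex.exp_add, Eg]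
    ring_nf
  rw [h2, h, Real.sqrt_eq_rpow, Complex.ofReal_cpow (by positivity)]
  push_cast
  norm_num

variable {b : ℝ}

lemma Mg_rec' (hb : 0 < b) (r : ℝ) (k : ℕ) :
    (2*(b:ℂ)) * Mg b r (k+1) = (k:ℂ) * Mg b r (k-1) + Complex.I * r * Mg b r k := by
  have hb2 : (b:ℂ) ≠ 0 := by exact_mod_cast hb.ne'
  rw [Mg_rec hb r k]
  field_simp

lemma Mg_one' (hb : 0 < b) (r : ℝ) : (2*(b:ℂ)) * Mg b r 1 = Complex.I * r * Mg b r 0 := by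
  have h := Mg_rec' hb r 0
  push_cast at h
  linear_combination h

lemma Mg_two' (hb : 0 < b) (r : ℝ) :
    (4*(b:ℂ)^2) * Mg b r 2 = (2*(b:ℂ) - r^2) * Mg b r 0 := by
  have h := Mg_rec' hb r 1
  push_cast at h
  linear_combination (2*(b:ℂ))*h + (Complex.I*r)*Mg_one' hb r
    + ((r:ℂ)^2 * Mg b r 0)*Complex.I_sq

lemma Mg_three' (hb : 0 < b) (r : ℝ) :
    (8*(b:ℂ)^3) * Mg b r 3 = Complex.I * r * (6*(b:ℂ) - r^2) * Mg b r 0 := by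
  have h := Mg_rec' hb r 2
  push_cast at h
  linear_combination (4*(b:ℂ)^2)*h + (4*(b:ℂ))*Mg_one' hb r + (Complex.I*r)*Mg_two' hb r

lemma Mg_four' (hb : 0 < b) (r : ℝ) :
    (16*(b:ℂ)^4) * Mg b r 4 = (12*(b:ℂ)^2 - 12*b*r^2 + r^4) * Mg b r 0 := by
  have h := Mg_rec' hb r 3
  push_cast at h
  linear_combination (8*(b:ℂ)^3)*h + (6*(b:ℂ))*Mg_two' hb r + (Complex.I*r)*Mg_three' hb r
    + ((r:ℂ)^2*(6*(b:ℂ) - r^2)*Mg b r 0)*Complex.I_sq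

lemma Mg_one_c (hb : 0 < b) (r : ℝ) :
    Mg b r 1 = Complex.I * r / (2*b) * Mg b r 0 := by
  have hb2 : (b:ℂ) ≠ 0 := by exact_mod_cast hb.ne'
  field_simp
  linear_combination Mg_one' hb r

lemma Mg_two_c (hb : 0 < b) (r : ℝ) :
    Mg b r 2 = (2*(b:ℂ) - r^2)/(4*b^2) * Mg b r 0 := by
  have hb2 : (b:ℂ) ≠ 0 := by exact_mod_cast hb.ne'
  field_simp
  linear_combination Mg_two' hb r

lemma Mg_three_c (hb : 0 < b) (r : ℝ) :
    Mg b r 3 = Complex.I * r * (6*(b:ℂ) - r^2)/(8*b^3) * Mg b r 0 := by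
  have hb2 : (b:ℂ) ≠ 0 := by exact_mod_cast hb.ne'
  field_simp
  linear_combination Mg_three' hb r

lemma Mg_four_c (hb : 0 < b) (r : ℝ) :
    Mg b r 4 = (12*(b:ℂ)^2 - 12*b*r^2 + r^4)/(16*b^4) * Mg b r 0 := by
  have hb2 : (b:ℂ) ≠ 0 := by exact_mod_cast hb.ne'
  field_simp
  linear_combination Mg_four' hb r

lemma inner_eq {σ : ℝ} (hσ : 0 < σ) (j : ℕ) (t : ℝ) :
    ftR (fun x => x ^ j * Real.exp (-(x ^ 2) / (4 * σ ^ 2))) t = Mg (1/(4*σ^2)) t j := by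
  have hσ0 : σ ≠ 0 := hσ.ne'
  unfold ftR Mg Eg
  congr 1
  ext x
  push_cast
  rw [mul_comm, mul_assoc, ← Complex.exp_add]
  congr 2
  field_simp

lemma sqrt_pi_inner {σ : ℝ} (hσ : 0 < σ) :
    Real.sqrt (Real.pi / (1/(4*σ^2))) = 2*σ*Real.sqrt Real.pi := by
  rw [show Real.pi / (1/(4*σ^2)) = (2*σ)^2 * Real.pi by field_simp; ring,
    Real.sqrt_mul (sq_nonneg _), Real.sqrt_sq (by positivity)]

lemma sqrt_pi_outer {σ : ℝ} (hσ : 0 < σ) :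
    Real.sqrt (Real.pi / σ^2) = Real.sqrt Real.pi / σ := by
  rw [show Real.pi / σ^2 = (1/σ)^2 * Real.pi by field_simp,
    Real.sqrt_mul (sq_nonneg _), Real.sqrt_sq (by positivity)]
  ring

lemma hM0in {σ : ℝ} (hσ : 0 < σ) (t : ℝ) :
    Mg (1/(4*σ^2)) t 0 = ((2*σ*Real.sqrt Real.pi : ℝ) : ℂ) *
      Complex.exp (-((σ^2 : ℝ):ℂ) * t^2) := by
  have hb1 : (0:ℝ) < 1/(4*σ^2) := by positivity
  rw [Mg_zero hb1 t, sqrt_pi_inner hσ]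
  congr 2
  have hσ0 : σ ≠ 0 := hσ.ne'
  push_cast
  field_simp

lemma hM0out {σ : ℝ} (hσ : 0 < σ) (z : ℝ) :
    Mg (σ^2) (-z) 0 = ((Real.sqrt Real.pi / σ : ℝ) : ℂ) *
      ((Real.exp (-(z^2)/(4*σ^2)) : ℝ) : ℂ) := by
  have hb2 : (0:ℝ) < σ^2 := by positivity
  rw [Mg_zero hb2 (-z), sqrt_pi_outer hσ, Complex.ofReal_exp]
  congr 2
  have hσ0 : σ ≠ 0 := hσ.ne'
  push_cast
  ring

lemma keyEg (σ z : ℝ) (t : ℝ) :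
    Eg (σ^2) (-z) t = Complex.exp (-((σ^2 : ℝ):ℂ) * t^2) *
      Complex.exp (-(Complex.I * (t:ℂ) * (z:ℂ))) := by
  rw [Eg, ← Complex.exp_add]
  congr 1
  push_cast
  ring

lemma outer0 (σ z : ℝ) (hσ : 0 < σ) :
    (∫ t : ℝ, ftR (fun x => x ^ 0 * Real.exp (-(x ^ 2) / (4 * σ ^ 2))) t *
      Complex.exp (-(Complex.I * (t : ℂ) * (z : ℂ))) * ((1 + σ ^ 2 * t ^ 2 / 2 : ℝ) : ℂ))
    = ((2*Real.pi * ((5/4 - z^2/(8*σ^2)) * Real.exp (-(z^2)/(4*σ^2))) : ℝ) : ℂ) := by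
  have hb2 : (0:ℝ) < σ^2 := by positivity
  have hσ0 : σ ≠ 0 := hσ.ne'
  have hσc : (σ:ℂ) ≠ 0 := by exact_mod_cast hσ0
  have hspX : ((Real.sqrt Real.pi:ℝ):ℂ)^2 = ((Real.pi : ℝ) : ℂ) := by
    norm_cast
    exact Real.sq_sqrt Real.pi_pos.le
  have hcongr : ∀ t : ℝ, ftR (fun x => x ^ 0 * Real.exp (-(x ^ 2) / (4 * σ ^ 2))) t *
      Complex.exp (-(Complex.I * (t : ℂ) * (z : ℂ))) * ((1 + σ ^ 2 * t ^ 2 / 2 : ℝ) : ℂ)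
      = ((2*σ*Real.sqrt Real.pi : ℝ):ℂ) * ((t:ℂ)^0 * Eg (σ^2) (-z) t)
        + ((σ^3*Real.sqrt Real.pi : ℝ):ℂ) * ((t:ℂ)^2 * Eg (σ^2) (-z) t) := by
    intro t
    rw [inner_eq hσ 0 t, hM0in hσ t, keyEg σ z t]
    push_cast
    ring
  simp only [hcongr]
  rw [integral_add ((intEg hb2 (-z) 0).const_mul _) ((intEg hb2 (-z) 2).const_mul _),
    integral_const_mul, integral_const_mul]
  show _ * Mg (σ^2) (-z) 0 + _ * Mg (σ^2) (-z) 2 = _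
  rw [Mg_two_c hb2 (-z), hM0out hσ z]
  push_cast
  rw [← hspX]
  field_simp [hσc]
  ring

lemma outer1 (σ z : ℝ) (hσ : 0 < σ) :
    (∫ t : ℝ, ftR (fun x => x ^ 1 * Real.exp (-(x ^ 2) / (4 * σ ^ 2))) t *
      Complex.exp (-(Complex.I * (t : ℂ) * (z : ℂ))) * ((1 + σ ^ 2 * t ^ 2 / 2 : ℝ) : ℂ))
    = ((2*Real.pi * ((7*z/4 - z^3/(8*σ^2)) * Real.exp (-(z^2)/(4*σ^2))) : ℝ) : ℂ) := by
  have hb1 : (0:ℝ) < 1/(4*σ^2) := by positivity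
  have hb2 : (0:ℝ) < σ^2 := by positivity
  have hσ0 : σ ≠ 0 := hσ.ne'
  have hσc : (σ:ℂ) ≠ 0 := by exact_mod_cast hσ0
  have hspX : ((Real.sqrt Real.pi:ℝ):ℂ)^2 = ((Real.pi : ℝ) : ℂ) := by
    norm_cast
    exact Real.sq_sqrt Real.pi_pos.le
  have hcongr : ∀ t : ℝ, ftR (fun x => x ^ 1 * Real.exp (-(x ^ 2) / (4 * σ ^ 2))) t *
      Complex.exp (-(Complex.I * (t : ℂ) * (z : ℂ))) * ((1 + σ ^ 2 * t ^ 2 / 2 : ℝ) : ℂ)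
      = (Complex.I * ((4*σ^3*Real.sqrt Real.pi : ℝ):ℂ)) * ((t:ℂ)^1 * Eg (σ^2) (-z) t)
        + (Complex.I * ((2*σ^5*Real.sqrt Real.pi : ℝ):ℂ)) * ((t:ℂ)^3 * Eg (σ^2) (-z) t) := by
    intro t
    rw [inner_eq hσ 1 t, Mg_one_c hb1 t, hM0in hσ t, keyEg σ z t]
    push_cast
    field_simp [hσc]
    ring
  simp only [hcongr]
  rw [integral_add ((intEg hb2 (-z) 1).const_mul _) ((intEg hb2 (-z) 3).const_mul _),
    integral_const_mul, integral_const_mul]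
  show _ * Mg (σ^2) (-z) 1 + _ * Mg (σ^2) (-z) 3 = _
  rw [Mg_one_c hb2 (-z), Mg_three_c hb2 (-z), hM0out hσ z]
  push_cast
  rw [← hspX]
  field_simp [hσc]
  ring_nf
  simp [Complex.I_sq]
  ring

lemma outer2 (σ z : ℝ) (hσ : 0 < σ) :
    (∫ t : ℝ, ftR (fun x => x ^ 2 * Real.exp (-(x ^ 2) / (4 * σ ^ 2))) t *
      Complex.exp (-(Complex.I * (t : ℂ) * (z : ℂ))) * ((1 + σ ^ 2 * t ^ 2 / 2 : ℝ) : ℂ))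
    = ((2*Real.pi * ((-σ^2 + 9*z^2/4 - z^4/(8*σ^2)) * Real.exp (-(z^2)/(4*σ^2))) : ℝ) : ℂ) := by
  have hb1 : (0:ℝ) < 1/(4*σ^2) := by positivity
  have hb2 : (0:ℝ) < σ^2 := by positivity
  have hσ0 : σ ≠ 0 := hσ.ne'
  have hσc : (σ:ℂ) ≠ 0 := by exact_mod_cast hσ0
  have hspX : ((Real.sqrt Real.pi:ℝ):ℂ)^2 = ((Real.pi : ℝ) : ℂ) := by
    norm_cast
    exact Real.sq_sqrt Real.pi_pos.le
  have hcongr : ∀ t : ℝ, ftR (fun x => x ^ 2 * Real.exp (-(x ^ 2) / (4 * σ ^ 2))) t *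
      Complex.exp (-(Complex.I * (t : ℂ) * (z : ℂ))) * ((1 + σ ^ 2 * t ^ 2 / 2 : ℝ) : ℂ)
      = ((4*σ^3*Real.sqrt Real.pi : ℝ):ℂ) * ((t:ℂ)^0 * Eg (σ^2) (-z) t)
        + ((-(6*σ^5*Real.sqrt Real.pi) : ℝ):ℂ) * ((t:ℂ)^2 * Eg (σ^2) (-z) t)
        + ((-(4*σ^7*Real.sqrt Real.pi) : ℝ):ℂ) * ((t:ℂ)^4 * Eg (σ^2) (-z) t) := by
    intro t
    rw [inner_eq hσ 2 t, Mg_two_c hb1 t, hM0in hσ t, keyEg σ z t]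
    push_cast
    field_simp [hσc]
    ring
  simp only [hcongr]
  have hAB : Integrable (fun t : ℝ => ((4*σ^3*Real.sqrt Real.pi : ℝ):ℂ) * ((t:ℂ)^0 * Eg (σ^2) (-z) t)
      + ((-(6*σ^5*Real.sqrt Real.pi) : ℝ):ℂ) * ((t:ℂ)^2 * Eg (σ^2) (-z) t)) :=
    ((intEg hb2 (-z) 0).const_mul _).add ((intEg hb2 (-z) 2).const_mul _)
  rw [integral_add hAB ((intEg hb2 (-z) 4).const_mul _),
    integral_add ((intEg hb2 (-z) 0).const_mul _) ((intEg hb2 (-z) 2).const_mul _),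
    integral_const_mul, integral_const_mul, integral_const_mul]
  show _ * Mg (σ^2) (-z) 0 + _ * Mg (σ^2) (-z) 2 + _ * Mg (σ^2) (-z) 4 = _
  rw [Mg_two_c hb2 (-z), Mg_four_c hb2 (-z), hM0out hσ z]
  push_cast
  rw [← hspX]
  field_simp [hσc]
  ring_nf

end Stmt12Aux

/-- Explicit formulas for `I₀, I₁, I₂` for the Laplace error density. -/
theorem stmt12 (σ : ℝ) (hσ : 0 < σ) :
    (∀ z : ℝ, ILap σ 0 z = (5 / 4 - z ^ 2 / (8 * σ ^ 2)) * Real.exp (-(z ^ 2) / (4 * σ ^ 2))) ∧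
    (∀ z : ℝ, ILap σ 1 z =
      (7 * z / 4 - z ^ 3 / (8 * σ ^ 2)) * Real.exp (-(z ^ 2) / (4 * σ ^ 2))) ∧
    (∀ z : ℝ, ILap σ 2 z =
      (-σ ^ 2 + 9 * z ^ 2 / 4 - z ^ 4 / (8 * σ ^ 2)) * Real.exp (-(z ^ 2) / (4 * σ ^ 2))) := by
  have hπ : Real.pi ≠ 0 := Real.pi_ne_zero
  refine ⟨fun z => ?_, fun z => ?_, fun z => ?_⟩
  · unfold ILap
    rw [outer0 σ z hσ, Complex.ofReal_re]
    field_simp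
  · unfold ILap
    rw [outer1 σ z hσ, Complex.ofReal_re]
    field_simp
  · unfold ILap
    rw [outer2 σ z hσ, Complex.ofReal_re]
    field_simp
end
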